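/- Let s, t ∈ ℝ with ρ ≤ |t| ≤ √(ρ²+1) and ρ ≤ |s| ≤ √(ρ²+1) for some ρ > 0, and let x, y ∈ ℝ^d with ‖x‖² ≤ t² − ρ² and ‖y‖² ≤ s² − ρ². Then I₃^ρ := √(t² − ρ² − ‖x‖²)·√(s² − ρ² − ‖y‖²)·sign(st) and I₂^ρ := √(1 + ρ² − t²)·√(1 + ρ² − s²) satisfy |⟨x,y⟩·sign(st) + I₃^ρ| + I₂^ρ ≤ 1. -/

import Mathlib

lemma stmt_8_aux1 (a b u v p q : ℝ) (ha : 0 ≤ a) (hb : 0 ≤ b) (hu : 0 ≤ u)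
    (hv : 0 ≤ v) (hp : 0 ≤ p) (hq : 0 ≤ q)
    (h1 : a ^ 2 + u ^ 2 = p ^ 2) (h2 : b ^ 2 + v ^ 2 = q ^ 2) :
    a * b + u * v ≤ p * q := by
  nlinarith [sq_nonneg (a * v - b * u), mul_nonneg hp hq, mul_nonneg ha hb,
    mul_nonneg hu hv]

lemma stmt_8_aux2 (p q r w : ℝ) (h1 : p ^ 2 + r ^ 2 = 1) (h2 : q ^ 2 + w ^ 2 = 1) :
    p * q + r * w ≤ 1 := by
  nlinarith [sq_nonneg (p - q), sq_nonneg (r - w)]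

theorem stmt_8 (d : ℕ) (ρ s t : ℝ) (hρ : 0 < ρ)
    (ht1 : ρ ≤ |t|) (ht2 : |t| ≤ Real.sqrt (ρ^2 + 1))
    (hs1 : ρ ≤ |s|) (hs2 : |s| ≤ Real.sqrt (ρ^2 + 1))
    (x y : EuclideanSpace ℝ (Fin d))
    (hx : ‖x‖^2 ≤ t^2 - ρ^2) (hy : ‖y‖^2 ≤ s^2 - ρ^2) :
    |(inner ℝ x y : ℝ) * Real.sign (s * t) +
        Real.sqrt (t^2 - ρ^2 - ‖x‖^2) * Real.sqrt (s^2 - ρ^2 - ‖y‖^2) * Real.sign (s * t)| +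
      Real.sqrt (1 + ρ^2 - t^2) * Real.sqrt (1 + ρ^2 - s^2) ≤ 1 := by
  set σ := Real.sign (s * t) with hσdef
  have hσ : |σ| ≤ 1 := by
    rcases Real.sign_apply_eq (s * t) with h | h | h <;> rw [hσdef, h] <;> norm_num
  set a := ‖x‖ with hadef
  set b := ‖y‖ with hbdef
  have ha : 0 ≤ a := norm_nonneg _
  have hb : 0 ≤ b := norm_nonneg _
  have ht2' : t ^ 2 ≤ ρ ^ 2 + 1 := by
    have h := Real.sq_sqrt (by positivity : (0:ℝ) ≤ ρ ^ 2 + 1)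
    calc t ^ 2 = |t| ^ 2 := (sq_abs t).symm
      _ ≤ Real.sqrt (ρ ^ 2 + 1) ^ 2 := pow_le_pow_left₀ (abs_nonneg t) ht2 2
      _ = ρ ^ 2 + 1 := h
  have hs2' : s ^ 2 ≤ ρ ^ 2 + 1 := by
    have h := Real.sq_sqrt (by positivity : (0:ℝ) ≤ ρ ^ 2 + 1)
    calc s ^ 2 = |s| ^ 2 := (sq_abs s).symm
      _ ≤ Real.sqrt (ρ ^ 2 + 1) ^ 2 := pow_le_pow_left₀ (abs_nonneg s) hs2 2
      _ = ρ ^ 2 + 1 := h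
  set u := Real.sqrt (t ^ 2 - ρ ^ 2 - a ^ 2) with hudef
  set v := Real.sqrt (s ^ 2 - ρ ^ 2 - b ^ 2) with hvdef
  set p := Real.sqrt (t ^ 2 - ρ ^ 2) with hpdef
  set q := Real.sqrt (s ^ 2 - ρ ^ 2) with hqdef
  set r := Real.sqrt (1 + ρ ^ 2 - t ^ 2) with hrdef
  set w := Real.sqrt (1 + ρ ^ 2 - s ^ 2) with hwdef
  have hu : 0 ≤ u := Real.sqrt_nonneg _
  have hv : 0 ≤ v := Real.sqrt_nonneg _
  have hp : 0 ≤ p := Real.sqrt_nonneg _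
  have hq : 0 ≤ q := Real.sqrt_nonneg _
  have hxsq : 0 ≤ a ^ 2 := sq_nonneg a
  have hysq : 0 ≤ b ^ 2 := sq_nonneg b
  have hu2 : u ^ 2 = t ^ 2 - ρ ^ 2 - a ^ 2 := Real.sq_sqrt (by linarith)
  have hv2 : v ^ 2 = s ^ 2 - ρ ^ 2 - b ^ 2 := Real.sq_sqrt (by linarith)
  have hp2 : p ^ 2 = t ^ 2 - ρ ^ 2 := Real.sq_sqrt (by linarith)
  have hq2 : q ^ 2 = s ^ 2 - ρ ^ 2 := Real.sq_sqrt (by linarith)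
  have hr2 : r ^ 2 = 1 + ρ ^ 2 - t ^ 2 := Real.sq_sqrt (by linarith)
  have hw2 : w ^ 2 = 1 + ρ ^ 2 - s ^ 2 := Real.sq_sqrt (by linarith)
  have hinner : |(inner ℝ x y : ℝ)| ≤ a * b := abs_real_inner_le_norm x y
  have h1 : |(inner ℝ x y : ℝ) * σ + u * v * σ| ≤ a * b + u * v := by
    have e : (inner ℝ x y : ℝ) * σ + u * v * σ = ((inner ℝ x y : ℝ) + u * v) * σ := by ring
    rw [e, abs_mul]
    have h2 : |(inner ℝ x y : ℝ) + u * v| ≤ a * b + u * v := by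
      calc |(inner ℝ x y : ℝ) + u * v| ≤ |(inner ℝ x y : ℝ)| + |u * v| := abs_add_le _ _
        _ = |(inner ℝ x y : ℝ)| + u * v := by rw [abs_of_nonneg (mul_nonneg hu hv)]
        _ ≤ a * b + u * v := by linarith
    calc |(inner ℝ x y : ℝ) + u * v| * |σ| ≤ |(inner ℝ x y : ℝ) + u * v| * 1 :=
          mul_le_mul_of_nonneg_left hσ (abs_nonneg _)
      _ = |(inner ℝ x y : ℝ) + u * v| := mul_one _
      _ ≤ a * b + u * v := h2
  have h3 : a * b + u * v ≤ p * q :=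
    stmt_8_aux1 a b u v p q ha hb hu hv hp hq (by linarith) (by linarith)
  have h4 : p * q + r * w ≤ 1 :=
    stmt_8_aux2 p q r w (by linarith) (by linarith)
  linarith
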